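/- For all integers p, all integers q ≥ 0, and all integers n ≥ 1, one has q!·H_n^{(p,q+1)} = Σ_{k=0}^{q} (−1)^k · e_{q−k}(n+1, n+2, …, n+q) · H_n^{(p−k)}, where e_j denotes the j-th elementary symmetric polynomial in the listed q variables (with e_0 = 1). -/

import Mathlib

open Finset Real

/-- The generalized harmonic number `H_n^{(p)} = ∑_{k=1}^n 1/k^p`. -/
noncomputable def gH (p : ℤ) (n : ℕ) : ℝ := ∑ k ∈ Finset.Icc 1 n, ((k : ℝ) ^ p)⁻¹

/-- The generalized hyperharmonic number `H_n^{(p,q)}`: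
`H_n^{(p,0)} = 1/n^p` (with `H_0^{(p,q)} = 0`) and
`H_n^{(p,q)} = ∑_{k=1}^n H_k^{(p,q-1)}` for `q ≥ 1`. -/
noncomputable def gHH (p : ℤ) : ℕ → ℕ → ℝ
  | 0, n => if n = 0 then 0 else ((n : ℝ) ^ p)⁻¹
  | q + 1, n => ∑ k ∈ Finset.Icc 1 n, gHH p q k

/-- Euler sum of generalized harmonic numbers `ζ_{H^{(p)}}(r) = ∑_{n≥1} H_n^{(p)}/n^r`. -/
noncomputable def eulerSum (p r : ℤ) : ℝ := ∑' n : ℕ+, gH p n / (n : ℝ) ^ r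

/-- Euler sum of generalized hyperharmonic numbers
`ζ_{H^{(p,q)}}(r) = ∑_{n≥1} H_n^{(p,q)}/n^r`. -/
noncomputable def eulerSumHH (p : ℤ) (q : ℕ) (r : ℤ) : ℝ := ∑' n : ℕ+, gHH p q n / (n : ℝ) ^ r

/-- Riemann zeta value at an integer argument, `ζ(s) = ∑_{n≥1} 1/n^s`. -/
noncomputable def zv (s : ℤ) : ℝ := ∑' n : ℕ+, ((n : ℝ) ^ s)⁻¹

/-- Unsigned Stirling numbers of the first kind, defined by
`x(x+1)⋯(x+q-1) = ∑_{k=0}^q [q,k] x^k`, i.e. `[n+1,k] = [n,k-1] + n·[n,k]`. -/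
def stirlingFirst : ℕ → ℕ → ℕ
  | 0, 0 => 1
  | 0, _ + 1 => 0
  | _ + 1, 0 => 0
  | n + 1, k + 1 => stirlingFirst n k + n * stirlingFirst n (k + 1)

/-- The series `μ(r,j) = ∑_{n≥1} 1/(n^r (n+j))`. -/
noncomputable def mu (r j : ℕ) : ℝ := ∑' n : ℕ+, 1 / ((n : ℝ) ^ r * ((n : ℝ) + j))

/-- `e_j(n+1, n+2, …, n+q)`: the `j`-th elementary symmetric polynomial
evaluated at the numbers `n+1, …, n+q`. -/
noncomputable def esymmVal (n q j : ℕ) : ℝ :=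
  ∑ s ∈ Finset.powersetCard j (Finset.Icc 1 q), ∏ i ∈ s, ((n : ℝ) + i)

lemma gHH_eq (p : ℤ) (q : ℕ) : ∀ n : ℕ, gHH p (q + 1) n
    = ∑ j ∈ Finset.Icc 1 n, ((n - j + q).choose q : ℝ) * ((j : ℝ) ^ p)⁻¹ := by
  induction q with
  | zero =>
    intro n
    show ∑ k ∈ Finset.Icc 1 n, gHH p 0 k = _
    refine Finset.sum_congr rfl fun j hj => ?_
    have hj' : j ≠ 0 := by simp only [Finset.mem_Icc] at hj; omega
    simp [gHH, hj']
  | succ q ih =>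
    intro n
    show ∑ k ∈ Finset.Icc 1 n, gHH p (q + 1) k = _
    simp_rw [ih]
    rw [Finset.sum_comm' (s' := fun j => Finset.Icc j n) (t' := Finset.Icc 1 n)
      (by intro k j; simp only [Finset.mem_Icc]; omega)]
    refine Finset.sum_congr rfl fun j hj => ?_
    simp only [Finset.mem_Icc] at hj
    rw [← Finset.sum_mul]
    congr 1
    rw [← Nat.cast_sum]
    congr 1
    have : ∑ k ∈ Finset.Icc j n, (k - j + q).choose q
        = ∑ m ∈ Finset.Icc q (n - j + q), m.choose q := by
      refine Finset.sum_nbij' (fun k => k - j + q) (fun m => m - q + j) ?_ ?_ ?_ ?_ ?_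
      · intro k hk; simp only [Finset.mem_Icc] at *; omega
      · intro m hm; simp only [Finset.mem_Icc] at *; omega
      · intro k hk; simp only [Finset.mem_Icc] at hk; omega
      · intro m hm; simp only [Finset.mem_Icc] at hm; omega
      · intro k hk; rfl
    rw [this, Nat.sum_Icc_choose]
    rfl

lemma prod_Icc_fact (m : ℕ) : ∀ q : ℕ,
    (∏ i ∈ Finset.Icc 1 q, (m + i)) * m.factorial = (m + q).factorial := by
  intro q
  induction q with
  | zero => simp
  | succ q ih =>
    rw [Finset.prod_Icc_succ_top (by omega)]
    rw [mul_right_comm, ih]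
    rw [show m + (q + 1) = (m + q) + 1 by ring, Nat.factorial_succ]
    ring

lemma fact_choose_eq_prod (q m : ℕ) :
    q.factorial * (m + q).choose q = ∏ i ∈ Finset.Icc 1 q, (m + i) := by
  have h1 := Nat.choose_mul_factorial_mul_factorial (show q ≤ m + q by omega)
  have h2 := prod_Icc_fact m q
  have h3 : (m + q) - q = m := by omega
  rw [h3] at h1
  have := h1.trans h2.symm
  have hpos : 0 < m.factorial := Nat.factorial_pos m
  have : (m + q).choose q * q.factorial = ∏ i ∈ Finset.Icc 1 q, (m + i) :=
    Nat.eq_of_mul_eq_mul_right hpos (by linarith [this])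
  linarith [this]

lemma expand_prod (n q : ℕ) (x : ℝ) :
    ∏ i ∈ Finset.Icc 1 q, ((n : ℝ) + i - x)
      = ∑ k ∈ Finset.range (q + 1), (-1 : ℝ) ^ k * esymmVal n q (q - k) * x ^ k := by
  have hcard : (Finset.Icc 1 q).card = q := by rw [Nat.card_Icc]; omega
  have h1 : ∏ i ∈ Finset.Icc 1 q, ((n : ℝ) + i - x)
      = ∏ i ∈ Finset.Icc 1 q, (((n : ℝ) + i) + (-x)) := by
    refine Finset.prod_congr rfl fun i _ => by ring
  rw [h1, Finset.prod_add]
  rw [Finset.sum_powerset, hcard]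
  have h2 : ∀ j ∈ Finset.range (q + 1),
      ∑ t ∈ Finset.powersetCard j (Finset.Icc 1 q),
        ((∏ i ∈ t, ((n : ℝ) + i)) * ∏ i ∈ Finset.Icc 1 q \ t, (-x))
      = esymmVal n q j * (-x) ^ (q - j) := by
    intro j hj
    rw [esymmVal, Finset.sum_mul]
    refine Finset.sum_congr rfl fun t ht => ?_
    rw [Finset.mem_powersetCard] at ht
    rw [Finset.prod_const, Finset.card_sdiff_of_subset ht.1, hcard, ht.2]
  rw [Finset.sum_congr rfl h2]
  rw [← Finset.sum_range_reflect]
  refine Finset.sum_congr rfl fun k hk => ?_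
  rw [Finset.mem_range] at hk
  have h3 : q + 1 - 1 - k = q - k := by omega
  have h4 : q - (q - k) = k := by omega
  rw [h3, h4, neg_pow]
  ring


/-- `q! * H_n^{(p,q+1)} = ∑_{k=0}^q (-1)^k e_{q-k}(n+1,…,n+q) H_n^{(p-k)}`. -/
theorem stmt_1 (p : ℤ) (q n : ℕ) (hn : 1 ≤ n) :
    (q.factorial : ℝ) * gHH p (q + 1) n
      = ∑ k ∈ Finset.range (q + 1),
          (-1 : ℝ) ^ k * esymmVal n q (q - k) * gH (p - k) n := by
  rw [gHH_eq, Finset.mul_sum]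
  have step1 : ∀ j ∈ Finset.Icc 1 n,
      (q.factorial : ℝ) * (((n - j + q).choose q : ℝ) * ((j : ℝ) ^ p)⁻¹)
      = (∑ k ∈ Finset.range (q + 1),
          (-1 : ℝ) ^ k * esymmVal n q (q - k) * ((j : ℝ) ^ (p - (k : ℤ)))⁻¹) := by
    intro j hj
    simp only [Finset.mem_Icc] at hj
    have hjn : j ≤ n := hj.2
    have hj0 : (j : ℝ) ≠ 0 := Nat.cast_ne_zero.mpr (by omega)
    have hc : (q.factorial : ℝ) * ((n - j + q).choose q : ℝ)
        = ∏ i ∈ Finset.Icc 1 q, ((n : ℝ) + i - j) := by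
      rw [← Nat.cast_mul, fact_choose_eq_prod q (n - j), Nat.cast_prod]
      refine Finset.prod_congr rfl fun i _ => ?_
      push_cast [Nat.cast_sub hjn]
      ring
    rw [← mul_assoc, hc, expand_prod n q (j : ℝ), Finset.sum_mul]
    refine Finset.sum_congr rfl fun k _ => ?_
    have hz : ((j : ℝ) ^ (p - (k : ℤ)))⁻¹ = (j : ℝ) ^ k * ((j : ℝ) ^ p)⁻¹ := by
      rw [zpow_sub₀ hj0, inv_div, div_eq_mul_inv, zpow_natCast]
    rw [hz]
    ring
  rw [Finset.sum_congr rfl step1, Finset.sum_comm]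
  refine Finset.sum_congr rfl fun k _ => ?_
  rw [gH, Finset.mul_sum]
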